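/- Let μ and ν be probability measures on ℝ^p and let RISGW(μ, ν) = inf over orthogonal matrices Δ ∈ O(p) of SGW_Δ(μ, ν). Then RISGW is rotation invariant: for any orthogonal matrix Q ∈ O(p), RISGW(Q#μ, ν) = RISGW(μ, ν), and likewise RISGW(μ, Q'#ν) = RISGW(μ, ν) for any orthogonal Q' ∈ O(p). -/

import Mathlib

open MeasureTheory Metric
open scoped RealInnerProductSpace ENNReal

noncomputable section

/-- The set of couplings of two measures on `ℝ`: measures on `ℝ × ℝ` whose first and second
marginals are `α` and `β` respectively. -/
def couplings1d (α β : Measure ℝ) : Set (Measure (ℝ × ℝ)) :=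
  {γ | γ.map Prod.fst = α ∧ γ.map Prod.snd = β}

/-- The 1D Gromov–Wasserstein value `GW₂²(d², α, β)`: the infimum over couplings `γ` of
`∬ ((s - s')² - (t - t')²)² dγ(s,t) dγ(s',t')`. -/
def GW2sq (α β : Measure ℝ) : ℝ≥0∞ :=
  ⨅ γ ∈ couplings1d α β,
    ∫⁻ z : (ℝ × ℝ) × (ℝ × ℝ),
      ENNReal.ofReal (((z.1.1 - z.2.1) ^ 2 - (z.1.2 - z.2.2) ^ 2) ^ 2) ∂(γ.prod γ)

/-- The uniform (normalized surface) probability measure `λ_{q-1}` on the unit sphere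
`S^{q-1} ⊂ ℝ^q`. -/
def sphereUniform (q : ℕ) : Measure (sphere (0 : EuclideanSpace ℝ (Fin q)) 1) :=
  ((volume : Measure (EuclideanSpace ℝ (Fin q))).toSphere Set.univ)⁻¹ •
    (volume : Measure (EuclideanSpace ℝ (Fin q))).toSphere

/-- The Sliced Gromov–Wasserstein discrepancy `SGW_Δ(μ, ν)`: the average over uniformly
distributed directions `θ ∈ S^{q-1}` of `GW₂²(d², P_θ#(Δ#μ), P_θ#ν)`, where
`P_θ : x ↦ ⟨x, θ⟩`. -/
def SGW {p q : ℕ} (Δ : EuclideanSpace ℝ (Fin p) →ₗ[ℝ] EuclideanSpace ℝ (Fin q))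
    (μ : Measure (EuclideanSpace ℝ (Fin p)))
    (ν : Measure (EuclideanSpace ℝ (Fin q))) : ℝ≥0∞ :=
  ∫⁻ θ : sphere (0 : EuclideanSpace ℝ (Fin q)) 1,
    GW2sq ((μ.map Δ).map (fun x => ⟪x, (θ : EuclideanSpace ℝ (Fin q))⟫))
      (ν.map (fun y => ⟪y, (θ : EuclideanSpace ℝ (Fin q))⟫)) ∂(sphereUniform q)

/-- The Rotation Invariant Sliced Gromov–Wasserstein: the infimum of `SGW_Δ(μ, ν)` over all
orthogonal maps `Δ ∈ O(p)` (identified with the linear isometric equivalences of `ℝ^p`). -/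
def RISGW {p : ℕ} (μ ν : Measure (EuclideanSpace ℝ (Fin p))) : ℝ≥0∞ :=
  ⨅ Δ : EuclideanSpace ℝ (Fin p) ≃ₗᵢ[ℝ] EuclideanSpace ℝ (Fin p),
    SGW Δ.toLinearEquiv.toLinearMap μ ν


variable {p : ℕ}

open scoped Pointwise

lemma mem_sph (Q : EuclideanSpace ℝ (Fin p) ≃ₗᵢ[ℝ] EuclideanSpace ℝ (Fin p))
    (x : sphere (0 : EuclideanSpace ℝ (Fin p)) 1) :
    Q (x : EuclideanSpace ℝ (Fin p)) ∈ sphere (0 : EuclideanSpace ℝ (Fin p)) 1 := by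
  simp [mem_sphere_zero_iff_norm, mem_sphere_zero_iff_norm.1 x.2]

/-- restriction of a linear isometry equiv to the unit sphere, as a homeomorphism -/
def sphereHomeo (Q : EuclideanSpace ℝ (Fin p) ≃ₗᵢ[ℝ] EuclideanSpace ℝ (Fin p)) :
    sphere (0 : EuclideanSpace ℝ (Fin p)) 1 ≃ₜ sphere (0 : EuclideanSpace ℝ (Fin p)) 1 where
  toFun x := ⟨Q x, mem_sph Q x⟩
  invFun x := ⟨Q.symm x, mem_sph Q.symm x⟩
  left_inv x := by ext; simp
  right_inv x := by ext; simp
  continuous_toFun := Continuous.subtype_mk (Q.continuous.comp continuous_subtype_val) _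
  continuous_invFun := Continuous.subtype_mk (Q.symm.continuous.comp continuous_subtype_val) _

def sphereME (Q : EuclideanSpace ℝ (Fin p) ≃ₗᵢ[ℝ] EuclideanSpace ℝ (Fin p)) :
    sphere (0 : EuclideanSpace ℝ (Fin p)) 1 ≃ᵐ sphere (0 : EuclideanSpace ℝ (Fin p)) 1 :=
  (sphereHomeo Q).toMeasurableEquiv

@[simp] lemma sphereME_apply (Q : EuclideanSpace ℝ (Fin p) ≃ₗᵢ[ℝ] EuclideanSpace ℝ (Fin p))
    (x : sphere (0 : EuclideanSpace ℝ (Fin p)) 1) :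
    ((sphereME Q x : sphere (0 : EuclideanSpace ℝ (Fin p)) 1) : EuclideanSpace ℝ (Fin p))
      = Q (x : EuclideanSpace ℝ (Fin p)) := rfl

lemma volume_preimage (Q : EuclideanSpace ℝ (Fin p) ≃ₗᵢ[ℝ] EuclideanSpace ℝ (Fin p))
    (B : Set (EuclideanSpace ℝ (Fin p))) : volume (⇑Q ⁻¹' B) = volume B := by
  have h1 : (volume : Measure (EuclideanSpace ℝ (Fin p))).map Q.toMeasurableEquiv = volume := by
    simpa using Q.measurePreserving.map_eq
  have h2 : (volume.map Q.toMeasurableEquiv) B = volume (⇑Q ⁻¹' B) :=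
    MeasurableEquiv.map_apply _ _
  rw [← h2, h1]

lemma toSphere_map (Q : EuclideanSpace ℝ (Fin p) ≃ₗᵢ[ℝ] EuclideanSpace ℝ (Fin p)) :
    (volume : Measure (EuclideanSpace ℝ (Fin p))).toSphere.map (sphereME Q) =
      (volume : Measure (EuclideanSpace ℝ (Fin p))).toSphere := by
  ext s hs
  rw [MeasurableEquiv.map_apply, Measure.toSphere_apply' _ ((sphereME Q).measurable hs),
    Measure.toSphere_apply' _ hs]
  congr 1
  have h1 : (Subtype.val '' ((sphereME Q) ⁻¹' s)) = ⇑Q ⁻¹' (Subtype.val '' s) := by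
    ext v
    constructor
    · rintro ⟨x, hx, rfl⟩
      exact ⟨sphereME Q x, hx, rfl⟩
    · rintro ⟨x, hx, hv⟩
      have hv' : (v : EuclideanSpace ℝ (Fin p)) ∈ sphere (0 : EuclideanSpace ℝ (Fin p)) 1 := by
        have h3 : ‖Q v‖ = 1 := by rw [← hv]; exact mem_sphere_zero_iff_norm.1 x.2
        simpa [mem_sphere_zero_iff_norm] using h3
      refine ⟨⟨v, hv'⟩, ?_, rfl⟩
      show sphereME Q ⟨v, hv'⟩ ∈ s
      have h4 : sphereME Q ⟨v, hv'⟩ = x := Subtype.ext hv.symm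
      rw [h4]; exact hx
  rw [h1]
  have h2 : Set.Ioo (0:ℝ) 1 • (⇑Q ⁻¹' (Subtype.val '' s)) =
      ⇑Q ⁻¹' (Set.Ioo (0:ℝ) 1 • (Subtype.val '' s)) := by
    ext y
    simp only [Set.mem_smul, Set.mem_preimage]
    constructor
    · rintro ⟨a, ha, b, hb, rfl⟩
      exact ⟨a, ha, Q b, hb, by simp [LinearIsometryEquiv.map_smul]⟩
    · rintro ⟨a, ha, c, hc, hy⟩
      refine ⟨a, ha, Q.symm c, by simpa using hc, ?_⟩
      apply Q.injective
      simp [LinearIsometryEquiv.map_smul, hy]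
  rw [h2, volume_preimage]

lemma sphereUniform_map (Q : EuclideanSpace ℝ (Fin p) ≃ₗᵢ[ℝ] EuclideanSpace ℝ (Fin p)) :
    (sphereUniform p).map (sphereME Q) = sphereUniform p := by
  unfold sphereUniform
  rw [MeasureTheory.Measure.map_smul, toSphere_map]

lemma measurable_lin {q : ℕ} (L : EuclideanSpace ℝ (Fin p) →ₗ[ℝ] EuclideanSpace ℝ (Fin q)) :
    Measurable ⇑L := L.continuous_of_finiteDimensional.measurable

lemma measurable_inner_right (θ : EuclideanSpace ℝ (Fin p)) :
    Measurable fun x : EuclideanSpace ℝ (Fin p) => ⟪x, θ⟫ :=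
  (continuous_id.inner continuous_const).measurable

lemma SGW_map_left (Q Δ : EuclideanSpace ℝ (Fin p) ≃ₗᵢ[ℝ] EuclideanSpace ℝ (Fin p))
    (μ ν : Measure (EuclideanSpace ℝ (Fin p))) :
    SGW Δ.toLinearEquiv.toLinearMap (μ.map ⇑Q) ν
      = SGW (Q.trans Δ).toLinearEquiv.toLinearMap μ ν := by
  unfold SGW
  refine lintegral_congr fun θ => ?_
  have h : (μ.map ⇑Q).map ⇑Δ.toLinearEquiv.toLinearMap
      = μ.map ⇑(Q.trans Δ).toLinearEquiv.toLinearMap := by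
    rw [Measure.map_map (measurable_lin _) Q.continuous.measurable]
    rfl
  rw [h]

lemma SGW_map_right (Q Δ : EuclideanSpace ℝ (Fin p) ≃ₗᵢ[ℝ] EuclideanSpace ℝ (Fin p))
    (μ ν : Measure (EuclideanSpace ℝ (Fin p))) :
    SGW Δ.toLinearEquiv.toLinearMap μ (ν.map ⇑Q)
      = SGW (Δ.trans Q.symm).toLinearEquiv.toLinearMap μ ν := by
  unfold SGW
  conv_lhs => rw [← sphereUniform_map Q, lintegral_map_equiv _ (sphereME Q)]
  refine lintegral_congr fun θ => ?_
  have h1 : (ν.map ⇑Q).map (fun y => ⟪y, ((sphereME Q θ : sphere (0 : EuclideanSpace ℝ (Fin p)) 1)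
        : EuclideanSpace ℝ (Fin p))⟫)
      = ν.map (fun y => ⟪y, (θ : EuclideanSpace ℝ (Fin p))⟫) := by
    rw [Measure.map_map (measurable_inner_right _) Q.continuous.measurable]
    congr 1
    funext y
    simp only [Function.comp_apply, sphereME_apply]
    exact Q.inner_map_map y θ
  have h2 : (μ.map ⇑Δ.toLinearEquiv.toLinearMap).map
        (fun x => ⟪x, ((sphereME Q θ : sphere (0 : EuclideanSpace ℝ (Fin p)) 1)
        : EuclideanSpace ℝ (Fin p))⟫)
      = (μ.map ⇑(Δ.trans Q.symm).toLinearEquiv.toLinearMap).map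
        (fun x => ⟪x, (θ : EuclideanSpace ℝ (Fin p))⟫) := by
    rw [Measure.map_map (measurable_inner_right _) (measurable_lin _),
      Measure.map_map (measurable_inner_right _) (measurable_lin _)]
    congr 1
    funext x
    simp only [Function.comp_apply, sphereME_apply]
    show ⟪Δ x, Q θ⟫ = ⟪Q.symm (Δ x), (θ : EuclideanSpace ℝ (Fin p))⟫
    rw [← Q.inner_map_map (Q.symm (Δ x)) θ, Q.apply_symm_apply]
  rw [h1, h2]

/-- **`RISGW` is rotation invariant**: for probability measures `μ, ν` on `ℝ^p` and any
orthogonal maps `Q, Q' ∈ O(p)`, `RISGW(Q#μ, ν) = RISGW(μ, ν)` and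
`RISGW(μ, Q'#ν) = RISGW(μ, ν)`. -/
theorem risgw_rotation_invariant {p : ℕ}
    (μ ν : Measure (EuclideanSpace ℝ (Fin p)))
    [IsProbabilityMeasure μ] [IsProbabilityMeasure ν]
    (Q Q' : EuclideanSpace ℝ (Fin p) ≃ₗᵢ[ℝ] EuclideanSpace ℝ (Fin p)) :
    RISGW (μ.map Q) ν = RISGW μ ν ∧ RISGW μ (ν.map Q') = RISGW μ ν := by
  constructor
  · unfold RISGW
    refine le_antisymm (le_iInf fun Δ => ?_) (le_iInf fun Δ => ?_)
    · refine iInf_le_of_le (Q.symm.trans Δ) (le_of_eq ?_)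
      rw [SGW_map_left Q (Q.symm.trans Δ) μ ν]
      have h : Q.trans (Q.symm.trans Δ) = Δ := by ext x; simp
      rw [h]
    · refine iInf_le_of_le (Q.trans Δ) (le_of_eq ?_)
      rw [SGW_map_left Q Δ μ ν]
  · unfold RISGW
    refine le_antisymm (le_iInf fun Δ => ?_) (le_iInf fun Δ => ?_)
    · refine iInf_le_of_le (Δ.trans Q') (le_of_eq ?_)
      rw [SGW_map_right Q' (Δ.trans Q') μ ν]
      have h : (Δ.trans Q').trans Q'.symm = Δ := by ext x; simp
      rw [h]
    · refine iInf_le_of_le (Δ.trans Q'.symm) (le_of_eq ?_)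
      rw [SGW_map_right Q' Δ μ ν]
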